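/- For all words w ∈ Σ_2 with |w| = k ≥ 3 and all t with t + k even, the greedy probabilities satisfy q_t(k−2)/(2(k−2)) ≥ q_t(w) ≥ q_t(k+2)/(2(k+2)). -/

import Mathlib

/-- One step of the greedy algorithm: shorten the buffer whenever possible. -/
def greedyStep (w : List Bool) (b : Bool) : List Bool :=
  if w.head? = some b then w.tail else w ++ [b]

/-- The greedy algorithm buffer `greedy(s)`. -/
def greedy (s : List Bool) : List Bool := s.foldl greedyStep []
/-- Binary words with at most two runs: `0^a 1^b` or `1^a 0^b`. -/
def Sigma2 : Set (List Bool) :=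
  {w | ∃ a b : ℕ, w = List.replicate a false ++ List.replicate b true ∨
      w = List.replicate a true ++ List.replicate b false}
/-- `q t w`: probability that the greedy buffer at time `t` equals `w`,
for a uniformly random binary word of length `t`. -/
noncomputable def q (t : ℕ) (w : List Bool) : ℝ :=
  ({f : Fin t → Bool | greedy (List.ofFn f) = w}.ncard : ℝ) / 2 ^ t

/-- `qlen t m`: probability that the greedy buffer at time `t` has length `m`. -/
noncomputable def qlen (t m : ℕ) : ℝ :=
  ({f : Fin t → Bool | (greedy (List.ofFn f)).length = m}.ncard : ℝ) / 2 ^ t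

/-- The canonical two-run word `x^a (¬x)^b`. -/
def W (x : Bool) (a b : ℕ) : List Bool :=
  List.replicate a x ++ List.replicate b (!x)

lemma W_cons (x : Bool) (a b : ℕ) : x :: W x a b = W x (a + 1) b := by
  simp [W, List.replicate_succ]

lemma W_snoc (x : Bool) (a b : ℕ) : W x a b ++ [!x] = W x a (b + 1) := by
  simp [W, List.replicate_succ' (n := b), List.append_assoc]

lemma W_length (x : Bool) (a b : ℕ) : (W x a b).length = a + b := by simp [W]

lemma W_zero (x : Bool) (b : ℕ) : W x 0 b = W (!x) b 0 := by simp [W]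

lemma W_nil (x : Bool) : W x 0 0 = [] := by simp [W]

lemma W_head (x : Bool) (a b : ℕ) : (W x (a+1) b).head? = some x := by
  simp [W, List.replicate_succ]

lemma W_tail (x : Bool) (a b : ℕ) : (W x (a+1) b).tail = W x a b := by
  simp [W, List.replicate_succ]

lemma W_getElem (x : Bool) (a b i : ℕ) (h : i < a + b) :
    (W x a b)[i]'(by simp [W_length, h]) = if i < a then x else !x := by
  show (List.replicate a x ++ List.replicate b (!x))[i]'(by simpa using h) = _
  rcases lt_or_ge i a with h1 | h1
  · rw [List.getElem_append_left (by simpa using h1 : i < (List.replicate a x).length)]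
    simp [h1]
  · rw [List.getElem_append_right (by simpa using h1 : (List.replicate a x).length ≤ i)]
    simp [Nat.not_lt.2 h1]

lemma step_W_same (x : Bool) (a b : ℕ) :
    greedyStep (W x (a+1) b) x = W x a b := by
  simp [greedyStep, W_head, W_tail]

lemma step_W_other (x : Bool) (a b : ℕ) :
    greedyStep (W x (a+1) b) (!x) = W x (a+1) (b+1) := by
  rw [greedyStep, if_neg, W_snoc]
  simp [W_head]

lemma greedy_append (s : List Bool) (c : Bool) :
    greedy (s ++ [c]) = greedyStep (greedy s) c := by
  simp [greedy, List.foldl_append]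

/-- Every greedy buffer is either empty or a two-run word with nonempty first run. -/
lemma greedy_shape (s : List Bool) :
    greedy s = [] ∨ ∃ x a b, 1 ≤ a ∧ greedy s = W x a b := by
  induction s using List.reverseRecOn with
  | nil => left; rfl
  | append_singleton s c ih =>
    rw [greedy_append]
    rcases ih with h | ⟨x, a, b, ha, h⟩
    · right; exact ⟨c, 1, 0, le_refl _, by simp [h, greedyStep, W]⟩
    · rw [h]
      obtain ⟨a, rfl⟩ := Nat.exists_eq_add_of_le ha
      rcases Bool.eq_or_eq_not c x with h | h
      · -- c = x : tail
        subst h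
        rw [Nat.add_comm 1 a, step_W_same]
        rcases Nat.eq_zero_or_pos a with rfl | ha'
        · rcases Nat.eq_zero_or_pos b with rfl | hb'
          · left; exact W_nil c
          · right; exact ⟨!c, b, 0, hb', by rw [W_zero c b]⟩
        · right; exact ⟨c, a, b, ha', rfl⟩
      · right
        subst h
        refine ⟨x, 1 + a, b + 1, by omega, ?_⟩
        rw [Nat.add_comm 1 a, step_W_other, Nat.add_comm a 1]

/-- All binary lists of length `t`. -/
def allLists : ℕ → Finset (List Bool)
  | 0 => {[]}
  | t + 1 => ((allLists t).image (· ++ [false])) ∪ ((allLists t).image (· ++ [true]))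

lemma mem_allLists (t : ℕ) (s : List Bool) : s ∈ allLists t ↔ s.length = t := by
  induction t generalizing s with
  | zero => simp [allLists, List.length_eq_zero_iff]
  | succ t ih =>
    simp only [allLists, Finset.mem_union, Finset.mem_image]
    constructor
    · rintro (⟨u, hu, rfl⟩ | ⟨u, hu, rfl⟩) <;> simp [ih u |>.1 hu]
    · intro h
      have hne : s ≠ [] := by intro h'; subst h'; simp at h
      have hd : s.dropLast ++ [s.getLast hne] = s := List.dropLast_append_getLast hne
      have hlen : s.dropLast ∈ allLists t := by
        rw [ih]; simp [List.length_dropLast, h]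
      cases hb : s.getLast hne
      · left; exact ⟨s.dropLast, hlen, by rw [← hb, hd]⟩
      · right; exact ⟨s.dropLast, hlen, by rw [← hb, hd]⟩

/-- Number of strings of length `t` whose greedy buffer is `w`. -/
def cnt (t : ℕ) (w : List Bool) : ℕ :=
  ((allLists t).filter (fun s => greedy s = w)).card

/-- Number of strings of length `t` whose greedy buffer has length `m`. -/
def cntLen (t m : ℕ) : ℕ :=
  ((allLists t).filter (fun s => (greedy s).length = m)).card

lemma cnt_succ (t : ℕ) (w : List Bool) :
    cnt (t + 1) w =
      ((allLists t).filter (fun s => greedyStep (greedy s) false = w)).card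
      + ((allLists t).filter (fun s => greedyStep (greedy s) true = w)).card := by
  have hinj : ∀ c : Bool, Function.Injective (fun s : List Bool => s ++ [c]) :=
    fun c s₁ s₂ h => by simpa using h
  have hdisj : Disjoint
      (((allLists t).image (· ++ [false])).filter (fun s => greedy s = w))
      (((allLists t).image (· ++ [true])).filter (fun s => greedy s = w)) := by
    rw [Finset.disjoint_left]
    rintro s hs₁ hs₂
    simp only [Finset.mem_filter, Finset.mem_image] at hs₁ hs₂
    obtain ⟨⟨u, _, rfl⟩, -⟩ := hs₁
    obtain ⟨⟨v, _, hv⟩, -⟩ := hs₂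
    have := congrArg List.getLast? hv
    simp at this
  rw [cnt, show allLists (t+1) = _ ∪ _ from rfl, Finset.filter_union,
    Finset.card_union_of_disjoint hdisj]
  congr 1 <;>
  · rw [Finset.filter_image, Finset.card_image_of_injective _ (hinj _)]
    apply Finset.card_bij (fun s _ => s) <;>
      simp +contextual [greedy_append]

lemma cnt_zero (w : List Bool) : cnt 0 w = if w = [] then 1 else 0 := by
  by_cases h : w = [] <;> simp [cnt, allLists, greedy, Finset.filter_singleton, h, Finset.filter_eq_empty_iff, List.nil_eq] <;>
    exact Finset.filter_eq_empty_iff.2 (by simp [Ne.symm h])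

/-- `(¬x) x^a (¬x)^b` is never a greedy buffer. -/
lemma cnt_unreach (t : ℕ) (x : Bool) (a b : ℕ) (ha : 1 ≤ a) (hb : 1 ≤ b) :
    cnt t ((!x) :: W x a b) = 0 := by
  rw [cnt, Finset.card_eq_zero, Finset.filter_eq_empty_iff]
  intro s _ hs
  rcases greedy_shape s with h | ⟨z, a', b', ha', h⟩
  · rw [hs] at h; exact List.cons_ne_nil _ _ h
  rw [hs] at h
  -- h : (!x) :: W x a b = W z a' b'
  have hlen : 1 + (a + b) = a' + b' := by
    have := congrArg List.length h
    simp [W_length] at this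
    omega
  have hget : ∀ i (hi : i < a' + b'), ((!x) :: W x a b)[i]'(by
      simp [W_length]; omega) = if i < a' then z else !z := by
    intro i hi
    exact (List.getElem_of_eq h _).trans (W_getElem z a' b' i hi)
  have h0 := hget 0 (by omega)
  have hA := hget a (by omega)
  have hAB := hget (a + b) (by omega)
  simp only [List.getElem_cons_zero] at h0
  have hA' : (W x a b)[a - 1]'(by simp [W_length]; omega) = if a < a' then z else !z := by
    have : a - 1 + 1 = a := by omega
    rw [← hA]
    simp [List.getElem_cons, show ¬ a = 0 by omega, this]
  have hAB' : (W x a b)[a + b - 1]'(by simp [W_length]; omega)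
      = if a + b < a' then z else !z := by
    have : a + b - 1 + 1 = a + b := by omega
    rw [← hAB]
    simp [List.getElem_cons, show ¬ a + b = 0 by omega, show a ≠ 0 by omega, this]
  rw [W_getElem x a b _ (by omega)] at hA' hAB'
  rw [if_pos (by omega)] at hA'
  rw [if_neg (by omega)] at hAB'
  -- h0 : !x = if 0 < a' then z else !z, with a' ≥ 1
  rw [if_pos (by omega)] at h0
  subst h0
  have hA'' : ¬ a < a' := by
    intro hlt; rw [if_pos hlt] at hA'; simp at hA'
  have hAB'' : a + b < a' := by
    by_contra hge; rw [if_neg hge] at hAB'; simp at hAB'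
  omega

/-- Strings whose buffer steps to `w` on input `c`. -/
def F (t : ℕ) (c : Bool) (w : List Bool) : ℕ :=
  ((allLists t).filter (fun s => greedyStep (greedy s) c = w)).card

lemma cnt_succ_x (t : ℕ) (x : Bool) (w : List Bool) :
    cnt (t + 1) w = F t x w + F t (!x) w := by
  cases x <;> rw [cnt_succ] <;> simp [F] <;> omega

lemma step_eq_iff (v w : List Bool) (c : Bool) :
    greedyStep v c = w ↔ v = c :: w ∨ (v.head? ≠ some c ∧ v ++ [c] = w) := by
  by_cases h : v.head? = some c
  · rw [greedyStep, if_pos h]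
    cases v with
    | nil => simp at h
    | cons a l =>
      simp only [List.head?_cons, Option.some_inj] at h
      subst h
      simp
  · rw [greedyStep, if_neg h]
    constructor
    · intro hw; exact Or.inr ⟨h, hw⟩
    · rintro (rfl | ⟨-, hw⟩)
      · simp at h
      · exact hw

lemma F_single (t : ℕ) (c : Bool) (w v1 : List Bool)
    (h : ∀ v, greedyStep v c = w ↔ v = v1) : F t c w = cnt t v1 := by
  rw [F, cnt]
  congr 1
  exact Finset.filter_congr fun s _ => by rw [h]

lemma F_pair (t : ℕ) (c : Bool) (w v1 v2 : List Bool) (hne : v1 ≠ v2)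
    (h : ∀ v, greedyStep v c = w ↔ v = v1 ∨ v = v2) :
    F t c w = cnt t v1 + cnt t v2 := by
  rw [F, cnt, cnt]
  rw [show ((allLists t).filter (fun s => greedyStep (greedy s) c = w)) =
      (allLists t).filter (fun s => greedy s = v1 ∨ greedy s = v2) from
    Finset.filter_congr fun s _ => by rw [h]]
  rw [Finset.filter_or]
  apply Finset.card_union_of_disjoint
  rw [Finset.disjoint_left]
  rintro s hs1 hs2
  simp only [Finset.mem_filter] at hs1 hs2
  exact hne (hs1.2 ▸ hs2.2)

lemma W_getLast_other (x : Bool) (a b : ℕ) :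
    (W x a (b + 1)).getLast? = some (!x) := by
  rw [← W_snoc]; simp

lemma W_getLast_same (x : Bool) (a : ℕ) :
    (W x (a + 1) 0).getLast? = some x := by
  have : W x (a + 1) 0 = List.replicate a x ++ [x] := by
    simp [W, List.replicate_succ' (n := a)]
  rw [this]; simp

lemma ne_not_self (x : Bool) : x ≠ !x := by cases x <;> simp

/-- Recursion for two-run words with both runs nonempty. -/
lemma R1 (t : ℕ) (x : Bool) (a b : ℕ) :
    cnt (t + 1) (W x (a + 1) (b + 1)) =
      cnt t (W x (a + 2) (b + 1)) + cnt t (W x (a + 1) b) := by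
  rw [cnt_succ_x t x]
  have h1 : F t x (W x (a + 1) (b + 1)) = cnt t (W x (a + 2) (b + 1)) := by
    apply F_single
    intro v
    rw [step_eq_iff, W_cons]
    constructor
    · rintro (rfl | ⟨-, hv⟩)
      · rfl
      · exfalso
        have := congrArg List.getLast? hv
        rw [W_getLast_other] at this
        simp at this
    · intro h; exact Or.inl h
  have h2 : F t (!x) (W x (a + 1) (b + 1)) =
      cnt t ((!x) :: W x (a + 1) (b + 1)) + cnt t (W x (a + 1) b) := by
    apply F_pair
    · intro h
      have := congrArg List.length h
      simp [W_length] at this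
      omega
    · intro v
      rw [step_eq_iff]
      constructor
      · rintro (rfl | ⟨-, hv⟩)
        · exact Or.inl rfl
        · right
          rw [← W_snoc] at hv
          exact List.append_cancel_right hv
      · rintro (rfl | rfl)
        · exact Or.inl rfl
        · right
          constructor
          · rw [W_head]; simp [ne_not_self x]
          · exact W_snoc x (a+1) b
  rw [h1, h2, cnt_unreach t x (a+1) (b+1) (by omega) (by omega)]
  omega

/-- Recursion for constant words of length ≥ 2. -/
lemma R2 (t : ℕ) (x : Bool) (a : ℕ) :
    cnt (t + 1) (W x (a + 2) 0) =
      cnt t (W x (a + 3) 0) + cnt t (W (!x) 1 (a + 2)) := by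
  rw [cnt_succ_x t x]
  have h1 : F t x (W x (a + 2) 0) = cnt t (W x (a + 3) 0) := by
    apply F_single
    intro v
    rw [step_eq_iff, W_cons]
    constructor
    · rintro (rfl | ⟨hh, hv⟩)
      · rfl
      · exfalso
        have h2 : W x (a + 2) 0 = W x (a + 1) 0 ++ [x] := by
          simp [W, List.replicate_succ' (n := a + 1)]
        rw [h2] at hv
        have := List.append_cancel_right hv
        subst this
        rw [W_head] at hh
        exact hh rfl
    · intro h; exact Or.inl h
  have h2 : F t (!x) (W x (a + 2) 0) = cnt t (W (!x) 1 (a + 2)) := by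
    apply F_single
    intro v
    rw [step_eq_iff]
    have hc : (!x) :: W x (a + 2) 0 = W (!x) 1 (a + 2) := by
      simp [W, List.replicate_succ]
    constructor
    · rintro (rfl | ⟨-, hv⟩)
      · exact hc
      · exfalso
        have := congrArg List.getLast? hv
        rw [W_getLast_same] at this
        simp at this
    · intro h
      rw [← hc] at h
      exact Or.inl h
  rw [h1, h2]

/-- Recursion for single-letter words. -/
lemma R3 (t : ℕ) (x : Bool) :
    cnt (t + 1) (W x 1 0) =
      (cnt t (W x 2 0) + cnt t []) + cnt t (W (!x) 1 1) := by
  rw [cnt_succ_x t x]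
  have h1 : F t x (W x 1 0) = cnt t (W x 2 0) + cnt t [] := by
    apply F_pair
    · intro h
      have := congrArg List.length h
      simp [W_length] at this
    · intro v
      rw [step_eq_iff, W_cons]
      constructor
      · rintro (rfl | ⟨hh, hv⟩)
        · exact Or.inl rfl
        · right
          have hw : W x 1 0 = [] ++ [x] := by simp [W]
          rw [hw] at hv
          exact List.append_cancel_right hv
      · rintro (rfl | rfl)
        · exact Or.inl rfl
        · right
          refine ⟨by simp, by simp [W]⟩
  have h2 : F t (!x) (W x 1 0) = cnt t (W (!x) 1 1) := by
    apply F_single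
    intro v
    rw [step_eq_iff]
    have hc : (!x) :: W x 1 0 = W (!x) 1 1 := by
      simp [W, List.replicate_succ]
    constructor
    · rintro (rfl | ⟨-, hv⟩)
      · exact hc
      · exfalso
        have := congrArg List.getLast? hv
        rw [W_getLast_same] at this
        simp at this
    · intro h
      rw [← hc] at h
      exact Or.inl h
  rw [h1, h2]

lemma greedyStep_map_not (w : List Bool) (c : Bool) :
    greedyStep (w.map not) (!c) = (greedyStep w c).map not := by
  cases w with
  | nil => simp [greedyStep]
  | cons a l =>
    by_cases h : a = c
    · subst h; simp [greedyStep]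
    · rw [greedyStep, greedyStep, if_neg (by simp [h]), if_neg]
      · simp
      · simp only [List.map_cons, List.head?_cons, Option.some_inj]
        cases a <;> cases c <;> simp_all

lemma greedy_map_not (s : List Bool) :
    greedy (s.map not) = (greedy s).map not := by
  induction s using List.reverseRecOn with
  | nil => rfl
  | append_singleton s c ih =>
    rw [List.map_append, List.map_singleton, greedy_append, greedy_append, ih,
      greedyStep_map_not]

lemma map_not_invol (s : List Bool) : (s.map not).map not = s := by
  simp [List.map_map, Function.comp_def]

lemma cnt_map_not (t : ℕ) (w : List Bool) : cnt t (w.map not) = cnt t w := by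
  rw [cnt, cnt]
  apply Finset.card_bij' (fun s _ => s.map not) (fun s _ => s.map not)
  · intro s _; exact map_not_invol s
  · intro s _; exact map_not_invol s
  · intro s hs
    simp only [Finset.mem_filter, mem_allLists] at hs ⊢
    refine ⟨by simp [hs.1], ?_⟩
    rw [greedy_map_not, hs.2, map_not_invol]
  · intro s hs
    simp only [Finset.mem_filter, mem_allLists] at hs ⊢
    refine ⟨by simp [hs.1], ?_⟩
    rw [greedy_map_not, hs.2]

lemma W_map_not (x : Bool) (a b : ℕ) : (W x a b).map not = W (!x) a b := by
  simp [W, List.map_replicate]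

lemma cnt_W_not (t : ℕ) (x : Bool) (a b : ℕ) :
    cnt t (W (!x) a b) = cnt t (W x a b) := by
  rw [← W_map_not, cnt_map_not]

lemma cnt_W_color (t : ℕ) (x y : Bool) (a b : ℕ) :
    cnt t (W x a b) = cnt t (W y a b) := by
  rcases Bool.eq_or_eq_not y x with rfl | rfl
  · rfl
  · rw [cnt_W_not]

/-- Main mutual induction: monotonicity within a length, and constant words
dominate extremal words two longer. -/
lemma AB (t : ℕ) :
    (∀ (x : Bool) (a b : ℕ), 1 ≤ a →
      cnt t (W x (a + 1) b) ≤ cnt t (W x a (b + 1))) ∧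
    (∀ (x y : Bool) (k : ℕ), 1 ≤ k →
      cnt t (W y 1 (k + 1)) ≤ cnt t (W x k 0)) := by
  induction t with
  | zero =>
    constructor
    · intro x a b ha
      rw [cnt_zero (W x (a+1) b), if_neg (by simp [W, List.replicate_succ])]
      exact Nat.zero_le _
    · intro x y k hk
      rw [cnt_zero (W y 1 (k+1)), if_neg (by simp [W, List.replicate_succ])]
      exact Nat.zero_le _
  | succ t ih =>
    obtain ⟨A, B⟩ := ih
    constructor
    · intro x a b ha
      obtain ⟨a, rfl⟩ := Nat.exists_eq_add_of_le ha
      rw [Nat.add_comm 1 a]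
      cases b with
      | zero =>
        -- compare W x (a+2) 0 with W x (a+1) 1
        rw [show a + 1 + 1 = a + 2 from rfl, R2 t x a,
          show (0:ℕ) + 1 = 0 + 1 from rfl]
        rw [show W x (a+1) (0+1) = W x (a+1) (0+1) from rfl]
        rw [R1 t x a 0]
        -- goal: cnt t (W x (a+3) 0) + cnt t (W (!x) 1 (a+2)) ≤
        --       cnt t (W x (a+2) 1) + cnt t (W x (a+1) 0)
        have h1 : cnt t (W x (a + 3) 0) ≤ cnt t (W x (a + 2) 1) := by
          have := A x (a + 2) 0 (by omega)
          simpa using this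
        have h2 : cnt t (W (!x) 1 (a + 2)) ≤ cnt t (W x (a + 1) 0) := by
          exact B x (!x) (a + 1) (by omega)
        simp only [Nat.add_assoc, Nat.reduceAdd, Nat.zero_add, Nat.add_zero] at *
        omega
      | succ b =>
        rw [R1 t x a (b + 1), R1 t x (a + 1) b]
        have h1 : cnt t (W x (a + 1 + 2) (b + 1)) ≤ cnt t (W x (a + 2) (b + 2)) := by
          have := A x (a + 2) (b + 1) (by omega)
          simpa [show a + 2 + 1 = a + 1 + 2 by omega] using this
        have h2 : cnt t (W x (a + 1 + 1) b) ≤ cnt t (W x (a + 1) (b + 1)) := by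
          exact A x (a + 1) b (by omega)
        simp only [Nat.add_assoc, Nat.reduceAdd, Nat.zero_add, Nat.add_zero] at *
        omega
    · intro x y k hk
      obtain ⟨j, rfl⟩ := Nat.exists_eq_add_of_le hk
      rw [Nat.add_comm 1 j]
      have hL : ∀ m, cnt (t + 1) (W y 1 (m + 2)) =
          cnt t (W y 2 (m + 2)) + cnt t (W y 1 (m + 1)) := by
        intro m
        have := R1 t y 0 (m + 1)
        simpa using this
      cases j with
      | zero =>
        show cnt (t + 1) (W y 1 (0 + 2)) ≤ cnt (t + 1) (W x 1 0)
        rw [R3 t x, hL 0]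
        have h1 : cnt t (W y 2 2) ≤ cnt t (W x 2 0) := by
          calc cnt t (W y 2 2) ≤ cnt t (W y 1 3) := A y 1 2 (by omega)
          _ ≤ cnt t (W x 2 0) := B x y 2 (by omega)
        have h2 : cnt t (W y 1 1) = cnt t (W (!x) 1 1) :=
          cnt_W_color t y (!x) 1 1
        simp only [Nat.add_assoc, Nat.reduceAdd, Nat.zero_add, Nat.add_zero] at *
        omega
      | succ j =>
        show cnt (t + 1) (W y 1 (j + 1 + 2)) ≤ cnt (t + 1) (W x (j + 2) 0)
        rw [R2 t x j, hL (j + 1)]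
        have h1 : cnt t (W y 2 (j + 3)) ≤ cnt t (W x (j + 3) 0) := by
          calc cnt t (W y 2 (j + 3)) ≤ cnt t (W y 1 (j + 4)) := A y 1 (j + 3) (by omega)
          _ ≤ cnt t (W x (j + 3) 0) := B x y (j + 3) (by omega)
        have h2 : cnt t (W y 1 (j + 2)) = cnt t (W (!x) 1 (j + 2)) :=
          cnt_W_color t y (!x) 1 (j + 2)
        simp only [show j + 1 + 2 = j + 3 from rfl, show j + 1 + 1 = j + 2 from rfl] at *
        omega

/-- Minimality of the constant word among a given length. -/
lemma min_chain (t : ℕ) (x : Bool) (b : ℕ) :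
    ∀ a, 1 ≤ a → cnt t (W x (a + b) 0) ≤ cnt t (W x a b) := by
  induction b with
  | zero => intro a _; exact le_refl _
  | succ b ih =>
    intro a ha
    calc cnt t (W x (a + (b + 1)) 0) = cnt t (W x ((a + 1) + b) 0) := by ring_nf
    _ ≤ cnt t (W x (a + 1) b) := ih (a + 1) (by omega)
    _ ≤ cnt t (W x a (b + 1)) := (AB t).1 x a b ha

/-- Maximality of the word with a single leading letter. -/
lemma max_chain (t : ℕ) (x : Bool) :
    ∀ a b, cnt t (W x (a + 1) b) ≤ cnt t (W x 1 (a + b)) := by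
  intro a
  induction a with
  | zero =>
    intro b
    exact Nat.le_of_eq (by norm_num)
  | succ a ih =>
    intro b
    calc cnt t (W x (a + 1 + 1) b) ≤ cnt t (W x (a + 1) (b + 1)) :=
        (AB t).1 x (a + 1) b (by omega)
    _ ≤ cnt t (W x 1 (a + (b + 1))) := ih (b + 1)
    _ = cnt t (W x 1 (a + 1 + b)) := by ring_nf

/-- Any two-run word of length `k` dominates any two-run word of length `k + 2`. -/
lemma cross (t : ℕ) (x z : Bool) (a b c d k : ℕ) (ha : 1 ≤ a) (hc : 1 ≤ c)
    (hab : a + b = k) (hcd : c + d = k + 2) (hk : 1 ≤ k) :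
    cnt t (W z c d) ≤ cnt t (W x a b) := by
  obtain ⟨c, rfl⟩ := Nat.exists_eq_add_of_le hc
  rw [Nat.add_comm 1 c]
  calc cnt t (W z (c + 1) d) ≤ cnt t (W z 1 (c + d)) := max_chain t z c d
  _ = cnt t (W z 1 (k + 1)) := by rw [show c + d = k + 1 by omega]
  _ ≤ cnt t (W x k 0) := (AB t).2 x z k hk
  _ = cnt t (W x (a + b) 0) := by rw [hab]
  _ ≤ cnt t (W x a b) := min_chain t x b a ha

/-- The finset of two-run words of length `m`. -/
def V (m : ℕ) : Finset (List Bool) :=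
  ((Finset.Icc 1 m) ×ˢ (Finset.univ : Finset Bool)).image
    (fun p => W p.2 p.1 (m - p.1))

lemma W_count (x : Bool) (a b : ℕ) : (W x a b).count x = a := by
  simp [W, List.count_append, List.count_replicate, ne_not_self x]

lemma W_head' (x : Bool) (a b : ℕ) (ha : 1 ≤ a) : (W x a b).head? = some x := by
  obtain ⟨a, rfl⟩ := Nat.exists_eq_add_of_le ha
  rw [Nat.add_comm 1 a, W_head]

lemma card_V (m : ℕ) : (V m).card = 2 * m := by
  rw [V, Finset.card_image_of_injOn]
  · simp [Finset.card_product, Nat.mul_comm]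
  · rintro ⟨a, x⟩ h ⟨a', x'⟩ h' heq
    simp only [Finset.coe_product, Set.mem_prod, Finset.mem_coe,
      Finset.mem_Icc] at h h'
    have hx : x = x' := by
      have h1 := congrArg List.head? heq
      rw [W_head' x a _ h.1.1, W_head' x' a' _ h'.1.1] at h1
      exact Option.some_inj.mp h1
    subst hx
    have ha : a = a' := by
      have h2 := congrArg (List.count x) heq
      rwa [W_count, W_count] at h2
    simp [ha]

lemma mem_V (m a b : ℕ) (x : Bool) (ha : 1 ≤ a) (hab : a + b = m) :
    W x a b ∈ V m := by
  rw [V, Finset.mem_image]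
  exact ⟨(a, x), by simp [Finset.mem_Icc]; omega, by rw [show m - a = b by omega]⟩

/-- `cntLen` as a sum of `cnt` over two-run words. -/
lemma cntLen_eq_sum (t m : ℕ) (hm : 1 ≤ m) :
    cntLen t m = ∑ v ∈ V m, cnt t v := by
  rw [cntLen]
  rw [Finset.card_eq_sum_card_fiberwise (f := greedy) (t := V m)]
  · apply Finset.sum_congr rfl
    intro v hv
    rw [cnt, Finset.filter_filter]
    congr 1
    apply Finset.filter_congr
    intro s hs
    constructor
    · rintro ⟨-, h⟩; exact h
    · intro h
      refine ⟨?_, h⟩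
      obtain ⟨⟨a, x⟩, hp, rfl⟩ := Finset.mem_image.mp hv
      simp only [Finset.mem_product, Finset.mem_Icc] at hp
      rw [h, W_length]
      omega
  · intro s hs
    simp only [Finset.mem_coe, Finset.mem_filter] at hs
    rcases greedy_shape s with h | ⟨x, a, b, ha, h⟩
    · rw [h] at hs; simp at hs; omega
    · rw [h] at hs ⊢
      rw [W_length] at hs
      exact mem_V m a b x ha hs.2

lemma V_elim (m : ℕ) (v : List Bool) (hv : v ∈ V m) :
    ∃ (y : Bool) (c d : ℕ), 1 ≤ c ∧ c + d = m ∧ v = W y c d := by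
  obtain ⟨⟨c, y⟩, hp, rfl⟩ := Finset.mem_image.mp hv
  simp only [Finset.mem_product, Finset.mem_Icc] at hp
  exact ⟨y, c, m - c, hp.1.1, by omega, rfl⟩

lemma main_nat (t k : ℕ) (x : Bool) (a b : ℕ) (ha : 1 ≤ a) (hab : a + b = k)
    (hk : 3 ≤ k) :
    2 * (k - 2) * cnt t (W x a b) ≤ cntLen t (k - 2) ∧
    cntLen t (k + 2) ≤ 2 * (k + 2) * cnt t (W x a b) := by
  constructor
  · rw [cntLen_eq_sum t (k - 2) (by omega)]
    have h : ∀ v ∈ V (k - 2), cnt t (W x a b) ≤ cnt t v := by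
      intro v hv
      obtain ⟨y, c, d, hc, hcd, rfl⟩ := V_elim _ v hv
      exact cross t y x c d a b (k - 2) hc ha hcd (by omega) (by omega)
    have := Finset.card_nsmul_le_sum (V (k - 2)) (cnt t) (cnt t (W x a b)) h
    rwa [card_V, smul_eq_mul] at this
  · rw [cntLen_eq_sum t (k + 2) (by omega)]
    have h : ∀ v ∈ V (k + 2), cnt t v ≤ cnt t (W x a b) := by
      intro v hv
      obtain ⟨y, c, d, hc, hcd, rfl⟩ := V_elim _ v hv
      exact cross t x y a b c d k ha hc hab hcd (by omega)
    have := Finset.sum_le_card_nsmul (V (k + 2)) (cnt t) (cnt t (W x a b)) h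
    rwa [card_V, smul_eq_mul] at this

lemma ncard_eq_card_filter (t : ℕ) (p : List Bool → Prop) [DecidablePred p] :
    {f : Fin t → Bool | p (List.ofFn f)}.ncard = ((allLists t).filter p).card := by
  rw [Set.ncard_eq_toFinset_card', Set.toFinset_setOf]
  apply Finset.card_bij (fun f _ => List.ofFn f)
  · intro f hf
    simp only [Finset.mem_filter, mem_allLists]
    exact ⟨by simp, by simpa using (Finset.mem_filter.mp hf).2⟩
  · intro f _ g _ h
    funext i
    have := congrArg (fun l : List Bool => l[(i : ℕ)]?) h
    simpa using this
  · intro s hs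
    simp only [Finset.mem_filter, mem_allLists] at hs
    have hofn : List.ofFn (fun i : Fin t => s[(i : ℕ)]'(by omega)) = s := by
      apply List.ext_getElem
      · simp [hs.1]
      · intro i h1 h2
        simp
    exact ⟨fun i => s[(i : ℕ)]'(by omega), by simp [hofn, hs.2], hofn⟩

lemma q_eq (t : ℕ) (w : List Bool) : q t w = (cnt t w : ℝ) / 2 ^ t := by
  rw [q, cnt, ncard_eq_card_filter t (fun s => greedy s = w)]

lemma qlen_eq (t m : ℕ) : qlen t m = (cntLen t m : ℝ) / 2 ^ t := by
  rw [qlen, cntLen, ncard_eq_card_filter t (fun s => (greedy s).length = m)]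

/-- for `w ∈ Σ₂` with `|w| = k ≥ 3` and `t + k` even,
`q_t(k-2)/(2(k-2)) ≥ q_t(w) ≥ q_t(k+2)/(2(k+2))`. -/
theorem greedy_q_uniform (t k : ℕ) (w : List Bool) (hw : w ∈ Sigma2)
    (hlen : w.length = k) (hk : 3 ≤ k) (hpar : (t + k) % 2 = 0) :
    q t w ≤ qlen t (k - 2) / (2 * ((k : ℝ) - 2)) ∧
    qlen t (k + 2) / (2 * ((k : ℝ) + 2)) ≤ q t w := by
  have hrep : ∃ (x : Bool) (a b : ℕ), 1 ≤ a ∧ w = W x a b := by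
    obtain ⟨a, b, h | h⟩ := hw
    · rcases Nat.eq_zero_or_pos a with rfl | ha
      · refine ⟨true, b, 0, ?_, by simpa [W] using h⟩
        rw [h] at hlen; simp at hlen; omega
      · exact ⟨false, a, b, ha, by simpa [W] using h⟩
    · rcases Nat.eq_zero_or_pos a with rfl | ha
      · refine ⟨false, b, 0, ?_, by simpa [W] using h⟩
        rw [h] at hlen; simp at hlen; omega
      · exact ⟨true, a, b, ha, by simpa [W] using h⟩
  obtain ⟨x, a, b, ha, rfl⟩ := hrep
  have hab : a + b = k := by rw [W_length] at hlen; exact hlen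
  have main := main_nat t k x a b ha hab hk
  have hT : (0:ℝ) < 2 ^ t := by positivity
  have hk' : (3:ℝ) ≤ (k:ℝ) := by exact_mod_cast hk
  have hK1 : (0:ℝ) < 2 * ((k:ℝ) - 2) := by linarith
  have hK2 : (0:ℝ) < 2 * ((k:ℝ) + 2) := by linarith
  have h1 : 2 * ((k:ℝ) - 2) * (cnt t (W x a b) : ℝ) ≤ (cntLen t (k - 2) : ℝ) := by
    have := (Nat.cast_le (α := ℝ)).mpr main.1
    push_cast [Nat.cast_sub (show 2 ≤ k by omega)] at this
    linarith
  have h2 : (cntLen t (k + 2) : ℝ) ≤ 2 * ((k:ℝ) + 2) * (cnt t (W x a b) : ℝ) := by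
    have := (Nat.cast_le (α := ℝ)).mpr main.2
    push_cast at this
    linarith
  rw [q_eq, qlen_eq, qlen_eq]
  constructor
  · rw [div_right_comm]
    gcongr
    rw [le_div_iff₀ hK1]
    linarith
  · rw [div_right_comm]
    gcongr
    rw [div_le_iff₀ hK2]
    linarith
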